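/- Let G = PΓL_2(F_q) with q = p^f (p prime), acting 3-transitively on the projective line Ω = P^1(F_q). The pointwise stabilizer in G of the three points ⟨e_1⟩, ⟨e_2⟩, ⟨e_1+e_2⟩ is the group of field automorphisms, which is cyclic of order f. Consequently Irred(G,Ω) ≤ 3 + π(f), where π(f) is the number of prime divisors of f counted with multiplicity. -/

import Mathlib

open Projectivization

/-- The projective line over `F`, as the projectivization of `F²`. -/
abbrev ProjLine (F : Type*) [Field F] := Projectivization F (Fin 2 → F)

/-- The subgroup `PΓL₂(F)` of the symmetric group on the projective line: the group of
all permutations induced by invertible semilinear transformations of `F²`. -/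
noncomputable def PGammaL2 (F : Type*) [Field F] : Subgroup (Equiv.Perm (ProjLine F)) :=
  Subgroup.closure {π | ∃ (τ : F ≃+* F) (g : (Fin 2 → F) ≃+ (Fin 2 → F)),
    (∀ (a : F) (v : Fin 2 → F), g (a • v) = τ a • g v) ∧
    ∀ (v : Fin 2 → F) (hv : v ≠ 0),
      π (Projectivization.mk F v hv) =
        Projectivization.mk F (g v) ((map_ne_zero_iff g g.injective).mpr hv)}

noncomputable def pt1 (F : Type*) [Field F] : ProjLine F :=
  Projectivization.mk F (Pi.single 0 1)
    (fun h => (one_ne_zero : (1:F) ≠ 0) (by simpa using congrFun h 0))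

noncomputable def pt2 (F : Type*) [Field F] : ProjLine F :=
  Projectivization.mk F (Pi.single 1 1)
    (fun h => (one_ne_zero : (1:F) ≠ 0) (by simpa using congrFun h 1))

noncomputable def pt3 (F : Type*) [Field F] : ProjLine F :=
  Projectivization.mk F (Pi.single 0 1 + Pi.single 1 1)
    (fun h => (one_ne_zero : (1:F) ≠ 0) (by simpa using congrFun h 0))

def listStab (G : Type*) {Ω : Type*} [Group G] [MulAction G Ω] (l : List Ω) : Subgroup G :=
  ⨅ ω ∈ l, MulAction.stabilizer G ω

def IsIrredundant (G : Type*) {Ω : Type*} [Group G] [MulAction G Ω] (l : List Ω) : Prop :=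
  ∀ k < l.length, listStab G (l.take (k + 1)) < listStab G (l.take k)

noncomputable def irredStat (G Ω : Type*) [Group G] [MulAction G Ω] : ℕ∞ :=
  sSup {n : ℕ∞ | ∃ l : List Ω, IsIrredundant G l ∧ (l.length : ℕ∞) = n}

section General
variable {F : Type*} [Field F]

/-- `π` is induced by the semilinear pair `(τ, g)`. -/
def Reps (π : Equiv.Perm (ProjLine F)) (τ : F ≃+* F) : Prop :=
  ∃ g : (Fin 2 → F) ≃+ (Fin 2 → F),
    (∀ (a : F) (v : Fin 2 → F), g (a • v) = τ a • g v) ∧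
    ∀ (v : Fin 2 → F) (hv : v ≠ 0),
      π (Projectivization.mk F v hv) =
        Projectivization.mk F (g v) ((map_ne_zero_iff g g.injective).mpr hv)

lemma reps_one : Reps (1 : Equiv.Perm (ProjLine F)) (1 : F ≃+* F) := by
  refine ⟨AddEquiv.refl _, fun a v => rfl, fun v hv => rfl⟩

lemma reps_mul {π₁ π₂ : Equiv.Perm (ProjLine F)} {τ₁ τ₂ : F ≃+* F}
    (h₁ : Reps π₁ τ₁) (h₂ : Reps π₂ τ₂) : Reps (π₁ * π₂) (τ₁ * τ₂) := by
  obtain ⟨g₁, hg₁, hπ₁⟩ := h₁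
  obtain ⟨g₂, hg₂, hπ₂⟩ := h₂
  refine ⟨g₂.trans g₁, fun a v => ?_, fun v hv => ?_⟩
  · simp only [AddEquiv.trans_apply, hg₂, hg₁]; rfl
  · have : (π₁ * π₂) (Projectivization.mk F v hv) = π₁ (π₂ (Projectivization.mk F v hv)) := rfl
    rw [this, hπ₂, hπ₁]
    rfl

lemma mk_eq_of_eq {v w : Fin 2 → F} (hv : v ≠ 0) (hw : w ≠ 0) (h : v = w) :
    Projectivization.mk F v hv = Projectivization.mk F w hw := by subst h; rfl

lemma reps_inv {π : Equiv.Perm (ProjLine F)} {τ : F ≃+* F}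
    (h : Reps π τ) : Reps π⁻¹ τ⁻¹ := by
  obtain ⟨g, hg, hπ⟩ := h
  have hsymm : ∀ (a : F) (v : Fin 2 → F), g.symm (a • v) = τ.symm a • g.symm v := by
    intro a v
    apply g.injective
    rw [g.apply_symm_apply, hg, RingEquiv.apply_symm_apply, g.apply_symm_apply]
  refine ⟨g.symm, hsymm, fun v hv => ?_⟩
  have hv' : g.symm v ≠ 0 := (map_ne_zero_iff g.symm g.symm.injective).mpr hv
  have h2 : π (Projectivization.mk F (g.symm v) hv') = Projectivization.mk F v hv :=
    (hπ (g.symm v) hv').trans (mk_eq_of_eq _ _ (g.apply_symm_apply v))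
  apply π.injective
  rw [show π (π⁻¹ (Projectivization.mk F v hv)) = Projectivization.mk F v hv from
    π.apply_symm_apply _, ← h2]

lemma exists_reps_of_mem {π : Equiv.Perm (ProjLine F)} (h : π ∈ PGammaL2 F) :
    ∃ τ : F ≃+* F, Reps π τ := by
  refine Subgroup.closure_induction (fun π hπ => ?_) ⟨1, reps_one⟩
    (fun π₁ π₂ _ _ ⟨τ₁, h₁⟩ ⟨τ₂, h₂⟩ => ⟨τ₁ * τ₂, reps_mul h₁ h₂⟩)
    (fun π _ ⟨τ, hτ⟩ => ⟨τ⁻¹, reps_inv hτ⟩) h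
  · obtain ⟨τ, g, hg, hπ'⟩ := hπ
    exact ⟨τ, g, hg, hπ'⟩

/-- The componentwise action of a field automorphism on `F²`. -/
def tauAddEquiv (τ : F ≃+* F) : (Fin 2 → F) ≃+ (Fin 2 → F) where
  toFun v := ⇑τ ∘ v
  invFun v := ⇑τ.symm ∘ v
  left_inv v := by funext i; simp
  right_inv v := by funext i; simp
  map_add' v w := by funext i; simp [Function.comp]

lemma tauAddEquiv_semilinear (τ : F ≃+* F) (a : F) (v : Fin 2 → F) :
    tauAddEquiv τ (a • v) = τ a • tauAddEquiv τ v := by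
  funext i; simp [tauAddEquiv, Function.comp]

/-- The permutation of the projective line induced by a semilinear pair. -/
noncomputable def semiPermFun (τ : F ≃+* F) (g : (Fin 2 → F) ≃+ (Fin 2 → F))
    (hg : ∀ (a : F) (v : Fin 2 → F), g (a • v) = τ a • g v) :
    ProjLine F → ProjLine F :=
  Projectivization.lift
    (fun v => Projectivization.mk F (g v.1) ((map_ne_zero_iff g g.injective).mpr v.2))
    (by
      rintro ⟨a, ha⟩ ⟨b, hb⟩ t (h : a = t • b)
      have ht : t ≠ 0 := by rintro rfl; simp at h; exact ha h
      apply (Projectivization.mk_eq_mk_iff' _ _ _ _ _).mpr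
      exact ⟨τ t, by simp only [h, hg]⟩)

lemma semiPermFun_mk (τ : F ≃+* F) (g : (Fin 2 → F) ≃+ (Fin 2 → F))
    (hg : ∀ (a : F) (v : Fin 2 → F), g (a • v) = τ a • g v) (v : Fin 2 → F) (hv : v ≠ 0) :
    semiPermFun τ g hg (Projectivization.mk F v hv) =
      Projectivization.mk F (g v) ((map_ne_zero_iff g g.injective).mpr hv) := rfl

noncomputable def semiPerm (τ : F ≃+* F) (g : (Fin 2 → F) ≃+ (Fin 2 → F))
    (hg : ∀ (a : F) (v : Fin 2 → F), g (a • v) = τ a • g v) :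
    Equiv.Perm (ProjLine F) where
  toFun := semiPermFun τ g hg
  invFun := semiPermFun τ.symm g.symm (fun a v => by
    apply g.injective
    rw [hg, RingEquiv.apply_symm_apply, g.apply_symm_apply, g.apply_symm_apply])
  left_inv := by
    apply Projectivization.ind
    intro v hv
    rw [semiPermFun_mk, semiPermFun_mk]
    exact mk_eq_of_eq _ _ (g.symm_apply_apply v)
  right_inv := by
    apply Projectivization.ind
    intro v hv
    rw [semiPermFun_mk, semiPermFun_mk]
    exact mk_eq_of_eq _ _ (g.apply_symm_apply v)

lemma semiPerm_reps (τ : F ≃+* F) (g : (Fin 2 → F) ≃+ (Fin 2 → F))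
    (hg : ∀ (a : F) (v : Fin 2 → F), g (a • v) = τ a • g v) :
    Reps (semiPerm τ g hg) τ :=
  ⟨g, hg, fun v hv => rfl⟩

lemma semiPerm_mem (τ : F ≃+* F) (g : (Fin 2 → F) ≃+ (Fin 2 → F))
    (hg : ∀ (a : F) (v : Fin 2 → F), g (a • v) = τ a • g v) :
    semiPerm τ g hg ∈ PGammaL2 F :=
  Subgroup.subset_closure ⟨τ, g, hg, fun v hv => rfl⟩

/-- The permutation induced by a field automorphism. -/
noncomputable def tauPerm (τ : F ≃+* F) : Equiv.Perm (ProjLine F) :=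
  semiPerm τ (tauAddEquiv τ) (tauAddEquiv_semilinear τ)

lemma tauPerm_mk (τ : F ≃+* F) (v : Fin 2 → F) (hv : v ≠ 0) (hv' : ⇑τ ∘ v ≠ 0) :
    tauPerm τ (Projectivization.mk F v hv) = Projectivization.mk F (⇑τ ∘ v) hv' := rfl

lemma tauPerm_mem (τ : F ≃+* F) : tauPerm τ ∈ PGammaL2 F :=
  semiPerm_mem _ _ _

lemma vec_decomp (v : Fin 2 → F) :
    v = v 0 • (Pi.single 0 1 : Fin 2 → F) + v 1 • (Pi.single 1 1 : Fin 2 → F) := by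
  funext i
  fin_cases i <;> simp

lemma indep_of_ne {u v : Fin 2 → F} (hu : u ≠ 0) (hv : v ≠ 0)
    (hne : Projectivization.mk F u hu ≠ Projectivization.mk F v hv) :
    ∀ s t : F, s • u + t • v = 0 → s = 0 ∧ t = 0 := by
  intro s t h
  rcases eq_or_ne s 0 with rfl | hs
  · simp only [zero_smul, zero_add, smul_eq_zero] at h
    exact ⟨rfl, h.resolve_right hv⟩
  · exfalso
    apply hne
    rw [Projectivization.mk_eq_mk_iff']
    refine ⟨-(s⁻¹ * t), ?_⟩
    have : s • u = -(t • v) := by rwa [add_eq_zero_iff_eq_neg] at h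
    rw [neg_smul, mul_smul, ← smul_neg, ← this, ← mul_smul, inv_mul_cancel₀ hs, one_smul]

lemma coeff_unique {u v : Fin 2 → F}
    (hind : ∀ s t : F, s • u + t • v = 0 → s = 0 ∧ t = 0)
    {s t s' t' : F} (h : s • u + t • v = s' • u + t' • v) : s = s' ∧ t = t' := by
  have h0 : (s - s') • u + (t - t') • v = 0 := by
    have h' := sub_eq_zero.mpr h
    rw [← h']
    module
  obtain ⟨h1, h2⟩ := hind _ _ h0
  exact ⟨sub_eq_zero.mp h1, sub_eq_zero.mp h2⟩

lemma reps_unique {π : Equiv.Perm (ProjLine F)} {τ τ' : F ≃+* F} {u v : Fin 2 → F}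
    (hu : u ≠ 0) (hv : v ≠ 0)
    (hind : ∀ s t : F, s • u + t • v = 0 → s = 0 ∧ t = 0)
    (hfixu : π (Projectivization.mk F u hu) = Projectivization.mk F u hu)
    (hfixv : π (Projectivization.mk F v hv) = Projectivization.mk F v hv)
    (hτ : Reps π τ) (hτ' : Reps π τ') : τ = τ' := by
  obtain ⟨g, hg, hπ⟩ := hτ
  obtain ⟨g', hg', hπ'⟩ := hτ'
  obtain ⟨a, ha⟩ := (Projectivization.mk_eq_mk_iff F _ _ _ _).mp ((hπ u hu).symm.trans hfixu)
  obtain ⟨b, hb⟩ := (Projectivization.mk_eq_mk_iff F _ _ _ _).mp ((hπ v hv).symm.trans hfixv)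
  obtain ⟨a', ha'⟩ := (Projectivization.mk_eq_mk_iff F _ _ _ _).mp ((hπ' u hu).symm.trans hfixu)
  obtain ⟨b', hb'⟩ := (Projectivization.mk_eq_mk_iff F _ _ _ _).mp ((hπ' v hv).symm.trans hfixv)
  rw [Units.smul_def] at ha hb ha' hb'
  have key : ∀ r : F, ∃ c : Fˣ,
      τ r * a = c * (τ' r * a') ∧ (b : F) = c * b' := by
    intro r
    have hw : r • u + v ≠ 0 := fun h =>
      one_ne_zero ((hind r 1 (by simpa using h)).2)
    have e1 : g (r • u + v) = (τ r * (a : F)) • u + (b : F) • v := by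
      rw [map_add, hg, ← ha, ← hb, smul_smul]
    have e2 : g' (r • u + v) = (τ' r * (a' : F)) • u + (b' : F) • v := by
      rw [map_add, hg', ← ha', ← hb', smul_smul]
    have := ((hπ (r • u + v) hw).symm.trans (hπ' (r • u + v) hw))
    obtain ⟨c, hc⟩ := (Projectivization.mk_eq_mk_iff F _ _ _ _).mp this
    rw [Units.smul_def, e1, e2, smul_add, smul_smul, smul_smul] at hc
    obtain ⟨h1, h2⟩ := coeff_unique hind hc.symm
    exact ⟨c, h1, h2⟩
  obtain ⟨c₁, hc₁, hcb₁⟩ := key 1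
  refine RingEquiv.ext fun r => ?_
  obtain ⟨c, hc, hcb⟩ := key r
  have hcc : (c : F) = c₁ :=
    mul_right_cancel₀ b'.ne_zero (hcb.symm.trans hcb₁)
  rw [hcc] at hc
  have ha₁ : (a : F) = c₁ * a' := by simpa using hc₁
  rw [ha₁] at hc
  have h4 : τ r * ((c₁ : F) * a') = τ' r * ((c₁ : F) * a') := by linear_combination hc
  exact mul_right_cancel₀ (mul_ne_zero c₁.ne_zero a'.ne_zero) h4

lemma exists_ne_zero_coord {u : Fin 2 → F} (hu : u ≠ 0) : u 0 ≠ 0 ∨ u 1 ≠ 0 := by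
  by_contra h
  push_neg at h
  exact hu (funext fun i => by fin_cases i <;> simp [h.1, h.2])

lemma det_ne_zero {u v : Fin 2 → F}
    (hu : u ≠ 0)
    (hind : ∀ s t : F, s • u + t • v = 0 → s = 0 ∧ t = 0) :
    u 0 * v 1 - u 1 * v 0 ≠ 0 := by
  intro hd
  have h1 : v 1 • u + (-u 1) • v = 0 := by
    funext i
    fin_cases i <;> simp <;> ring_nf <;> linear_combination (hd : u 0 * v 1 - u 1 * v 0 = 0)
  have h2 : v 0 • u + (-u 0) • v = 0 := by
    funext i
    fin_cases i <;> simp <;> ring_nf <;> linear_combination -(hd : u 0 * v 1 - u 1 * v 0 = 0)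
  obtain ⟨_, hu1⟩ := hind _ _ h1
  obtain ⟨_, hu0⟩ := hind _ _ h2
  rw [neg_eq_zero] at hu1 hu0
  rcases exists_ne_zero_coord hu with h | h
  · exact h hu0
  · exact h hu1

lemma span_two {u v : Fin 2 → F}
    (hu : u ≠ 0)
    (hind : ∀ s t : F, s • u + t • v = 0 → s = 0 ∧ t = 0) (w : Fin 2 → F) :
    ∃ s t : F, w = s • u + t • v := by
  set d := u 0 * v 1 - u 1 * v 0 with hd
  have hd0 : d ≠ 0 := det_ne_zero hu hind
  refine ⟨(w 0 * v 1 - w 1 * v 0) / d, (u 0 * w 1 - u 1 * w 0) / d, ?_⟩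
  funext i
  fin_cases i <;> simp <;> field_simp <;> ring

end General


lemma mem_listStab {G Ω : Type*} [Group G] [MulAction G Ω] {l : List Ω} {g : G} :
    g ∈ listStab G l ↔ ∀ ω ∈ l, g • ω = ω := by
  simp [listStab, Subgroup.mem_iInf, MulAction.mem_stabilizer_iff]

lemma listStab_le {G Ω : Type*} [Group G] [MulAction G Ω] {l : List Ω} {ω : Ω} (h : ω ∈ l) :
    listStab G l ≤ MulAction.stabilizer G ω := by
  intro g hg
  exact MulAction.mem_stabilizer_iff.mpr (mem_listStab.mp hg ω h)

section General2
variable {F : Type*} [Field F]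

lemma sub_smul_apply (π : (PGammaL2 F)) (x : ProjLine F) :
    π • x = (π : Equiv.Perm (ProjLine F)) x := rfl

/-- Characterization of the stabilizer of the three standard points. -/
lemma stab123_iff (π : (PGammaL2 F)) :
    π ∈ listStab (PGammaL2 F) [pt1 F, pt2 F, pt3 F] ↔
      ∃ τ : F ≃+* F,
        ∀ (v : Fin 2 → F) (hv : v ≠ 0),
          (π : Equiv.Perm (ProjLine F)) (Projectivization.mk F v hv) =
            Projectivization.mk F (⇑τ ∘ v)
              (fun h0 => hv (funext fun i =>
                (map_eq_zero_iff τ τ.injective).mp (congrFun h0 i))) := by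
  constructor
  · intro hmem
    rw [mem_listStab] at hmem
    obtain ⟨τ, g, hg, hπ⟩ := exists_reps_of_mem π.2
    have h1 := hmem (pt1 F) (by simp)
    have h2 := hmem (pt2 F) (by simp)
    have h3 := hmem (pt3 F) (by simp)
    rw [sub_smul_apply] at h1 h2 h3
    unfold pt1 at h1
    unfold pt2 at h2
    unfold pt3 at h3
    rw [hπ] at h1 h2 h3
    obtain ⟨a, ha⟩ := (Projectivization.mk_eq_mk_iff F _ _ _ _).mp h1
    obtain ⟨b, hb⟩ := (Projectivization.mk_eq_mk_iff F _ _ _ _).mp h2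
    obtain ⟨c, hc⟩ := (Projectivization.mk_eq_mk_iff F _ _ _ _).mp h3
    rw [Units.smul_def] at ha hb hc
    -- a = b = c
    have hab : (a : F) = c ∧ (b : F) = c := by
      have h4 : g (Pi.single 0 1 + Pi.single 1 1) =
          (a : F) • (Pi.single 0 1 : Fin 2 → F) + (b : F) • (Pi.single 1 1 : Fin 2 → F) := by
        rw [map_add, ← ha, ← hb]
      rw [← hc] at h4
      have h5 : (c : F) • (Pi.single 0 1 : Fin 2 → F) + (c : F) • (Pi.single 1 1 : Fin 2 → F) =
          (a : F) • (Pi.single 0 1 : Fin 2 → F) + (b : F) • (Pi.single 1 1 : Fin 2 → F) := by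
        rw [← smul_add]; exact h4
      constructor
      · have := congrFun h5 0; simpa using this.symm
      · have := congrFun h5 1; simpa using this.symm
    refine ⟨τ, fun v hv => ?_⟩
    rw [hπ]
    rw [Projectivization.mk_eq_mk_iff']
    refine ⟨a, ?_⟩
    -- g v = a • (τ ∘ v)
    have hgv : g v = (a : F) • (⇑τ ∘ v) := by
      conv_lhs => rw [vec_decomp v]
      rw [map_add, hg, hg, ← ha, ← hb, hab.1, hab.2]
      funext i
      fin_cases i <;> simp [Function.comp] <;> ring
    exact hgv.symm
  · rintro ⟨τ, hτ⟩
    rw [mem_listStab]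
    intro ω hω
    rw [sub_smul_apply]
    have single_ne : ∀ (w : Fin 2 → F) (hw : w ≠ 0), (⇑τ ∘ w = w) →
        (π : Equiv.Perm (ProjLine F)) (Projectivization.mk F w hw) =
          Projectivization.mk F w hw := by
      intro w hw hfix
      rw [hτ w hw]
      exact mk_eq_of_eq _ _ hfix
    simp only [List.mem_cons, List.not_mem_nil, or_false] at hω
    rcases hω with rfl | rfl | rfl
    · exact single_ne _ _ (funext fun i => by fin_cases i <;> simp)
    · exact single_ne _ _ (funext fun i => by fin_cases i <;> simp)
    · exact single_ne _ _ (funext fun i => by fin_cases i <;> simp [Pi.add_apply])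

lemma e0e1_indep : ∀ s t : F, s • (Pi.single 0 1 : Fin 2 → F) + t • (Pi.single 1 1 : Fin 2 → F) = 0
    → s = 0 ∧ t = 0 := by
  intro s t h
  constructor
  · have := congrFun h 0; simpa using this
  · have := congrFun h 1; simpa using this

lemma comp_ne_zero (τ : F ≃+* F) {v : Fin 2 → F} (hv : v ≠ 0) : ⇑τ ∘ v ≠ 0 :=
  fun h0 => hv (funext fun i => (map_eq_zero_iff τ τ.injective).mp (congrFun h0 i))

noncomputable def stabHom : RingAut F →* (listStab (PGammaL2 F) [pt1 F, pt2 F, pt3 F]) where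
  toFun τ := ⟨⟨tauPerm τ, tauPerm_mem τ⟩, (stab123_iff _).mpr ⟨τ, fun v hv => rfl⟩⟩
  map_one' := by
    ext1
    ext1
    apply Equiv.ext
    apply Projectivization.ind
    intro v hv
    show tauPerm 1 (Projectivization.mk F v hv) = Projectivization.mk F v hv
    rw [tauPerm_mk 1 v hv (by simpa using hv)]
    exact mk_eq_of_eq _ _ (funext fun i => rfl)
  map_mul' σ τ := by
    ext1
    ext1
    apply Equiv.ext
    apply Projectivization.ind
    intro v hv
    show tauPerm (σ * τ) (Projectivization.mk F v hv) =
      tauPerm σ (tauPerm τ (Projectivization.mk F v hv))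
    have h1 : ⇑(σ * τ) ∘ v ≠ 0 := fun h0 => hv (funext fun i => by
      have := congrFun h0 i
      simpa using (map_eq_zero_iff (σ * τ) (σ * τ).injective).mp this)
    have h2 : ⇑τ ∘ v ≠ 0 := fun h0 => hv (funext fun i => by
      have := congrFun h0 i
      simpa using (map_eq_zero_iff τ τ.injective).mp this)
    rw [tauPerm_mk (σ * τ) v hv h1, tauPerm_mk τ v hv h2,
      tauPerm_mk σ _ h2 (by
        intro h0
        apply h2
        funext i
        have := congrFun h0 i
        simpa using (map_eq_zero_iff σ σ.injective).mp this)]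
    exact mk_eq_of_eq _ _ (funext fun i => rfl)

lemma stabHom_injective : Function.Injective (stabHom (F := F)) := by
  intro σ τ h
  have hperm : tauPerm σ = tauPerm τ := congrArg Subtype.val (congrArg Subtype.val h)
  have he0 : (Pi.single 0 1 : Fin 2 → F) ≠ 0 :=
    fun h0 => (one_ne_zero : (1:F) ≠ 0) (by simpa using congrFun h0 0)
  have he1 : (Pi.single 1 1 : Fin 2 → F) ≠ 0 :=
    fun h0 => (one_ne_zero : (1:F) ≠ 0) (by simpa using congrFun h0 1)
  refine reps_unique he0 he1 e0e1_indep (π := tauPerm σ) ?_ ?_ (semiPerm_reps _ _ _)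
    (hperm ▸ semiPerm_reps _ _ _)
  · rw [tauPerm_mk σ _ he0 (comp_ne_zero σ he0)]
    exact mk_eq_of_eq _ _ (funext fun i => by fin_cases i <;> simp)
  · rw [tauPerm_mk σ _ he1 (comp_ne_zero σ he1)]
    exact mk_eq_of_eq _ _ (funext fun i => by fin_cases i <;> simp)

lemma stabHom_surjective : Function.Surjective (stabHom (F := F)) := by
  intro π
  obtain ⟨τ, hτ⟩ := (stab123_iff π.1).mp π.2
  refine ⟨τ, ?_⟩
  ext1
  ext1
  apply Equiv.ext
  apply Projectivization.ind
  intro v hv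
  show tauPerm τ (Projectivization.mk F v hv) =
    ((π : (PGammaL2 F)) : Equiv.Perm (ProjLine F)) (Projectivization.mk F v hv)
  rw [hτ v hv, tauPerm_mk τ v hv (by
    intro h0
    apply hv
    funext i
    exact (map_eq_zero_iff τ τ.injective).mp (congrFun h0 i))]

noncomputable def stabMulEquiv :
    RingAut F ≃* (listStab (PGammaL2 F) [pt1 F, pt2 F, pt3 F]) :=
  MulEquiv.ofBijective stabHom ⟨stabHom_injective, stabHom_surjective⟩

end General2

section GF
open Polynomial
variable (p f : ℕ) [Fact p.Prime]

noncomputable def ringAutEquivAlgAut :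
    RingAut (GaloisField p f) ≃ (GaloisField p f ≃ₐ[ZMod p] GaloisField p f) where
  toFun τ := AlgEquiv.ofRingEquiv (f := τ) (fun x => by
    have h := RingHom.ext_zmod ((τ : GaloisField p f →+* GaloisField p f).comp
      (algebraMap (ZMod p) (GaloisField p f))) (algebraMap (ZMod p) (GaloisField p f))
    exact RingHom.congr_fun h x)
  invFun σ := σ.toRingEquiv
  left_inv τ := by ext x; rfl
  right_inv σ := by ext x; rfl

instance : Finite (RingAut (GaloisField p f)) :=
  Finite.of_equiv _ (ringAutEquivAlgAut p f).symm

lemma card_ringAut (hf : 0 < f) : Nat.card (RingAut (GaloisField p f)) = f := by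
  rw [Nat.card_congr (ringAutEquivAlgAut p f),
    IsGalois.card_aut_eq_finrank, GaloisField.finrank p hf.ne']

lemma frob_pow_apply (k : ℕ) (x : GaloisField p f) :
    ((frobeniusEquiv (GaloisField p f) p) ^ k : RingAut (GaloisField p f)) x = x ^ p ^ k := by
  induction k generalizing x with
  | zero => rw [pow_zero, pow_zero, pow_one]; rfl
  | succ k ih =>
    have : ((frobeniusEquiv (GaloisField p f) p) ^ (k+1) : RingAut (GaloisField p f)) x =
        ((frobeniusEquiv (GaloisField p f) p) ^ k : RingAut (GaloisField p f))
          (frobeniusEquiv (GaloisField p f) p x) := by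
      rw [pow_succ]
      rfl
    rw [this, frobeniusEquiv_def, ih, ← pow_mul]
    congr 1
    exact (pow_succ' p k).symm

lemma exists_pow_ne (k : ℕ) (hk0 : 0 < k) (hkf : k < f) :
    ∃ x : GaloisField p f, x ^ p ^ k ≠ x := by
  by_contra h
  push_neg at h
  haveI : Fintype (GaloisField p f) := Fintype.ofFinite _
  set P : (GaloisField p f)[X] := X ^ p ^ k - X with hP
  have hp2 : 2 ≤ p := (Fact.out : p.Prime).two_le
  have hn1 : p ^ k ≠ 1 := by
    have : p ^ 1 ≤ p ^ k := Nat.pow_le_pow_right (by omega) hk0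
    simp at this; omega
  have hPne : P ≠ 0 := by
    intro h0
    have := congrArg (fun q => Polynomial.coeff q (p ^ k)) h0
    simp [hP, Polynomial.coeff_X_pow, Polynomial.coeff_X, Ne.symm hn1] at this
  have hsub : (Finset.univ : Finset (GaloisField p f)).val ⊆ P.roots := by
    intro x hx
    rw [Polynomial.mem_roots hPne]
    simp [hP, Polynomial.IsRoot, h x]
  have hcard := Polynomial.card_le_degree_of_subset_roots hsub
  have hdeg : P.natDegree ≤ p ^ k := by
    refine le_trans (Polynomial.natDegree_sub_le _ _) ?_
    have hpk : 0 < p ^ k := pow_pos (by omega) k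
    rw [Polynomial.natDegree_X_pow, Polynomial.natDegree_X]
    omega
  have hcardK : Fintype.card (GaloisField p f) = p ^ f := by
    rw [← Nat.card_eq_fintype_card, GaloisField.card p f (by omega)]
  have hcu : Finset.univ.card = Fintype.card (GaloisField p f) := Finset.card_univ
  have hlt2 : p ^ k < p ^ f := Nat.pow_lt_pow_right (by omega) hkf
  omega

lemma orderOf_frob (hf : 0 < f) :
    orderOf ((frobeniusEquiv (GaloisField p f) p) : RingAut (GaloisField p f)) = f := by
  haveI : Fintype (GaloisField p f) := Fintype.ofFinite _
  have hpowf : ((frobeniusEquiv (GaloisField p f) p) : RingAut (GaloisField p f)) ^ f = 1 := by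
    refine RingEquiv.ext fun x => ?_
    rw [frob_pow_apply]
    have hcardK : Fintype.card (GaloisField p f) = p ^ f := by
      rw [← Nat.card_eq_fintype_card, GaloisField.card p f hf.ne']
    have := FiniteField.pow_card x
    rw [hcardK] at this
    simpa using this
  have hdvd : orderOf ((frobeniusEquiv (GaloisField p f) p) : RingAut (GaloisField p f)) ∣ f :=
    orderOf_dvd_of_pow_eq_one hpowf
  set k := orderOf ((frobeniusEquiv (GaloisField p f) p) : RingAut (GaloisField p f)) with hk
  have hk0 : 0 < k := orderOf_pos _
  have hkle : k ≤ f := Nat.le_of_dvd hf hdvd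
  rcases lt_or_eq_of_le hkle with hlt | heq
  · exfalso
    obtain ⟨x, hx⟩ := exists_pow_ne p f k hk0 hlt
    apply hx
    rw [← frob_pow_apply p f k x, hk, pow_orderOf_eq_one]
    rfl
  · exact heq

lemma isCyclic_ringAut (hf : 0 < f) : IsCyclic (RingAut (GaloisField p f)) :=
  isCyclic_of_orderOf_eq_card _ (by rw [orderOf_frob p f hf, card_ringAut p f hf])

end GF

section Part4
variable {F : Type*} [Field F]

lemma reps_one_eq_id {π : Equiv.Perm (ProjLine F)} {u v w : Fin 2 → F}
    (hu : u ≠ 0) (hv : v ≠ 0) (hw : w ≠ 0)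
    (hind : ∀ s t : F, s • u + t • v = 0 → s = 0 ∧ t = 0)
    {s t : F} (hs : s ≠ 0) (ht : t ≠ 0) (hwst : w = s • u + t • v)
    (hfixu : π (Projectivization.mk F u hu) = Projectivization.mk F u hu)
    (hfixv : π (Projectivization.mk F v hv) = Projectivization.mk F v hv)
    (hfixw : π (Projectivization.mk F w hw) = Projectivization.mk F w hw)
    (hτ : Reps π (1 : F ≃+* F)) : π = 1 := by
  obtain ⟨g, hg, hπ⟩ := hτ
  have hg' : ∀ (r : F) (v' : Fin 2 → F), g (r • v') = r • g v' := fun r v' => hg r v'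
  obtain ⟨a, ha⟩ := (Projectivization.mk_eq_mk_iff F _ _ _ _).mp ((hπ u hu).symm.trans hfixu)
  obtain ⟨b, hb⟩ := (Projectivization.mk_eq_mk_iff F _ _ _ _).mp ((hπ v hv).symm.trans hfixv)
  obtain ⟨c, hc⟩ := (Projectivization.mk_eq_mk_iff F _ _ _ _).mp ((hπ w hw).symm.trans hfixw)
  rw [Units.smul_def] at ha hb hc
  have hgw : g w = (s * (a : F)) • u + (t * (b : F)) • v := by
    rw [hwst, map_add, hg', hg', ← ha, ← hb, smul_smul, smul_smul]
  have hcw : g w = ((c : F) * s) • u + ((c : F) * t) • v := by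
    rw [← hc, hwst, smul_add, smul_smul, smul_smul]
  obtain ⟨h1, h2⟩ := coeff_unique hind (hgw.symm.trans hcw)
  have hac : (a : F) = c := mul_left_cancel₀ hs (by linear_combination h1)
  have hbc : (b : F) = c := mul_left_cancel₀ ht (by linear_combination h2)
  apply Equiv.ext
  apply Projectivization.ind
  intro v' hv'
  obtain ⟨s', t', hdec⟩ := span_two hu hind v'
  have hgv' : g v' = (c : F) • v' := by
    rw [hdec, map_add, hg', hg', ← ha, ← hb, hac, hbc, smul_add, smul_smul, smul_smul,
      smul_smul, smul_smul, mul_comm s' (c : F), mul_comm t' (c : F)]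
  rw [hπ v' hv']
  show Projectivization.mk F (g v') _ = Projectivization.mk F v' hv'
  rw [Projectivization.mk_eq_mk_iff']
  exact ⟨c, hgv'.symm⟩

variable {x y z : ProjLine F}

/-- The stabilizer of three points in `PΓL₂`. -/
noncomputable abbrev stab3 (x y z : ProjLine F) : Subgroup (PGammaL2 F) :=
  MulAction.stabilizer (PGammaL2 F) x ⊓ MulAction.stabilizer (PGammaL2 F) y ⊓
    MulAction.stabilizer (PGammaL2 F) z

lemma stab3_fix {π : (PGammaL2 F)} (hπ : π ∈ stab3 x y z) :
    (π : Equiv.Perm (ProjLine F)) x = x ∧ (π : Equiv.Perm (ProjLine F)) y = y ∧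
      (π : Equiv.Perm (ProjLine F)) z = z := by
  obtain ⟨⟨h1, h2⟩, h3⟩ := hπ
  exact ⟨h1, h2, h3⟩

lemma stab3_reps_unique (hxy : x ≠ y) {π : (PGammaL2 F)} (hπ : π ∈ stab3 x y z)
    {τ τ' : F ≃+* F} (h : Reps (π : Equiv.Perm (ProjLine F)) τ)
    (h' : Reps (π : Equiv.Perm (ProjLine F)) τ') : τ = τ' := by
  have hne : Projectivization.mk F x.rep x.rep_nonzero ≠ Projectivization.mk F y.rep
      y.rep_nonzero := by
    rw [Projectivization.mk_rep, Projectivization.mk_rep]; exact hxy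
  obtain ⟨h1, h2, _⟩ := stab3_fix hπ
  refine reps_unique x.rep_nonzero y.rep_nonzero (indep_of_ne _ _ hne) ?_ ?_ h h'
  · rw [Projectivization.mk_rep]; exact h1
  · rw [Projectivization.mk_rep]; exact h2

/-- The field automorphism associated to an element of the stabilizer of three points. -/
noncomputable def stab3Hom (hxy : x ≠ y) : (stab3 x y z) →* RingAut F where
  toFun π := Classical.choose (exists_reps_of_mem π.1.2)
  map_one' := stab3_reps_unique hxy (1 : (stab3 x y z)).2
      (Classical.choose_spec (exists_reps_of_mem (1 : (stab3 x y z)).1.2)) reps_one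
  map_mul' π σ := stab3_reps_unique hxy (π * σ).2
      (Classical.choose_spec (exists_reps_of_mem (π * σ).1.2))
      (reps_mul (Classical.choose_spec (exists_reps_of_mem π.1.2))
        (Classical.choose_spec (exists_reps_of_mem σ.1.2)))

lemma stab3Hom_injective (hxy : x ≠ y) (hxz : x ≠ z) (hyz : y ≠ z) :
    Function.Injective (stab3Hom (z := z) hxy) := by
  refine (injective_iff_map_eq_one _).mpr fun π hπ1 => ?_
  have hreps := Classical.choose_spec (exists_reps_of_mem π.1.2)
  rw [show Classical.choose (exists_reps_of_mem π.1.2) = stab3Hom (z := z) hxy π from rfl,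
    hπ1] at hreps
  obtain ⟨h1, h2, h3⟩ := stab3_fix π.2
  -- set up the geometry
  have hne : Projectivization.mk F x.rep x.rep_nonzero ≠ Projectivization.mk F y.rep
      y.rep_nonzero := by rw [Projectivization.mk_rep, Projectivization.mk_rep]; exact hxy
  have hind := indep_of_ne x.rep_nonzero y.rep_nonzero hne
  obtain ⟨s, t, hdec⟩ := span_two x.rep_nonzero hind z.rep
  have hs : s ≠ 0 := by
    rintro rfl
    apply hyz
    rw [← Projectivization.mk_rep y, ← Projectivization.mk_rep z]
    refine ((Projectivization.mk_eq_mk_iff' F _ _ _ _).mpr ⟨t, ?_⟩).symm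
    rw [hdec]
    module
  have ht : t ≠ 0 := by
    rintro rfl
    apply hxz
    rw [← Projectivization.mk_rep x, ← Projectivization.mk_rep z]
    refine ((Projectivization.mk_eq_mk_iff' F _ _ _ _).mpr ⟨s, ?_⟩).symm
    rw [hdec]
    module
  have hid : (π : Equiv.Perm (ProjLine F)) = 1 := by
    refine reps_one_eq_id x.rep_nonzero y.rep_nonzero z.rep_nonzero hind hs ht hdec ?_ ?_ ?_ hreps
    · rw [Projectivization.mk_rep]; exact h1
    · rw [Projectivization.mk_rep]; exact h2
    · rw [Projectivization.mk_rep]; exact h3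
  ext1
  ext1
  exact hid

end Part4

section Chain

lemma omega_succ_le_of_proper_dvd {a b : ℕ} (h : a ∣ b) (hne : a ≠ b) (hb : b ≠ 0) :
    a.primeFactorsList.length + 1 ≤ b.primeFactorsList.length := by
  obtain ⟨c, rfl⟩ := h
  have ha : a ≠ 0 := by rintro rfl; simp at hb
  have hc : c ≠ 0 := by rintro rfl; simp at hb
  have hc1 : c ≠ 1 := by rintro rfl; simp at hne
  have hlen := (Nat.perm_primeFactorsList_mul ha hc).length_eq
  rw [List.length_append] at hlen
  have h1 : c.primeFactorsList ≠ [] := by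
    rw [Ne, Nat.primeFactorsList_eq_nil]
    push_neg
    exact ⟨hc, hc1⟩
  have h2 : 0 < c.primeFactorsList.length := List.length_pos_iff.mpr h1
  omega

lemma omega_le_of_dvd {a b : ℕ} (h : a ∣ b) (hb : b ≠ 0) :
    a.primeFactorsList.length ≤ b.primeFactorsList.length := by
  rcases eq_or_ne a b with rfl | hne
  · exact le_rfl
  · have := omega_succ_le_of_proper_dvd h hne hb
    omega

lemma chain_card_le {G : Type*} [Group G] [Finite G] (K : ℕ → Subgroup G) (m : ℕ)
    (hc : ∀ i < m, K (i + 1) < K i) :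
    ∀ i ≤ m, (Nat.card (K i)).primeFactorsList.length + i ≤
      (Nat.card (K 0)).primeFactorsList.length := by
  intro i
  induction i with
  | zero => intro _; omega
  | succ i ih =>
    intro hi
    have hlt := hc i (by omega)
    have hdvd : Nat.card (K (i + 1)) ∣ Nat.card (K i) :=
      Subgroup.card_dvd_of_le hlt.le
    have hne : Nat.card (K (i + 1)) ≠ Nat.card (K i) := by
      intro h
      exact hlt.ne (Subgroup.eq_of_le_of_card_ge hlt.le h.ge)
    have hpos : Nat.card (K i) ≠ 0 := Nat.card_pos.ne'
    have := omega_succ_le_of_proper_dvd hdvd hne hpos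
    have := ih (by omega)
    omega

end Chain

section Assemble
variable {G Ω : Type*} [Group G] [MulAction G Ω]

lemma listStab_append_singleton (l : List Ω) (ω : Ω) :
    listStab G (l ++ [ω]) = listStab G l ⊓ MulAction.stabilizer G ω := by
  ext g
  simp only [Subgroup.mem_inf, mem_listStab, List.mem_append, List.mem_singleton,
    MulAction.mem_stabilizer_iff]
  constructor
  · intro h
    exact ⟨fun ω' hω' => h ω' (Or.inl hω'), h ω (Or.inr rfl)⟩
  · rintro ⟨h1, h2⟩ ω' (hω' | rfl)
    · exact h1 ω' hω'
    · exact h2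

lemma listStab_take_succ (l : List Ω) (k : ℕ) (hk : k < l.length) :
    listStab G (l.take (k + 1)) = listStab G (l.take k) ⊓ MulAction.stabilizer G (l[k]) := by
  rw [← listStab_append_singleton]
  congr 1
  rw [List.take_succ]
  congr 1
  rw [List.getElem?_eq_getElem hk]
  rfl

lemma irred_distinct {l : List Ω} (hirr : IsIrredundant G l) {i j : ℕ} (hij : i < j)
    (hj : j < l.length) : l[i] ≠ l[j] := by
  intro heq
  have hstrict := hirr j hj
  rw [listStab_take_succ l j hj] at hstrict
  have hle : listStab G (l.take j) ≤ MulAction.stabilizer G (l[j]) := by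
    rw [← heq]
    have hmem : l[i] ∈ l.take j := by
      have : (l.take j)[i]'(by simp [hj.le]; omega) = l[i] := List.getElem_take
      rw [← this]
      exact List.getElem_mem _
    exact listStab_le hmem
  rw [inf_eq_left.mpr hle] at hstrict
  exact lt_irrefl _ hstrict

end Assemble

section Final
variable (p f : ℕ) [Fact p.Prime]

instance : Finite (ProjLine (GaloisField p f)) := Quotient.finite _

lemma irred_length_le (hf : 0 < f) (l : List (ProjLine (GaloisField p f)))
    (hirr : IsIrredundant (PGammaL2 (GaloisField p f)) l) :
    l.length ≤ 3 + f.primeFactorsList.length := by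
  rcases le_or_gt l.length 3 with h3 | h3
  · omega
  have h0 : 0 < l.length := by omega
  have h1 : 1 < l.length := by omega
  have h2 : 2 < l.length := by omega
  set x := l[0]
  set y := l[1]
  set z := l[2]
  have hxy : x ≠ y := irred_distinct hirr (by omega) h1
  have hxz : x ≠ z := irred_distinct hirr (by omega) h2
  have hyz : y ≠ z := irred_distinct hirr (by omega) h2
  have hdvdf : Nat.card (stab3 x y z) ∣ f := by
    have := Subgroup.card_dvd_of_injective (stab3Hom (z := z) hxy)
      (stab3Hom_injective hxy hxz hyz)
    rwa [card_ringAut p f hf] at this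
  have hmemtake : ∀ i : ℕ, ∀ hi : i < 3, l[i]'(by omega) ∈ l.take 3 := by
    intro i hi
    have : (l.take 3)[i]'(by simp; omega) = l[i]'(by omega) := List.getElem_take
    rw [← this]
    exact List.getElem_mem _
  have hK0le : listStab (PGammaL2 (GaloisField p f)) (l.take 3) ≤ stab3 x y z :=
    le_inf (le_inf (listStab_le (hmemtake 0 (by omega))) (listStab_le (hmemtake 1 (by omega))))
      (listStab_le (hmemtake 2 (by omega)))
  set K : ℕ → Subgroup (PGammaL2 (GaloisField p f)) :=
    fun i => listStab (PGammaL2 (GaloisField p f)) (l.take (3 + i)) with hK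
  have hc : ∀ i < l.length - 3, K (i + 1) < K i := by
    intro i hi
    have := hirr (3 + i) (by omega)
    have heq : 3 + (i + 1) = (3 + i) + 1 := by omega
    rw [hK]
    simp only []
    rw [heq]
    exact this
  have hchain := chain_card_le K (l.length - 3) hc (l.length - 3) le_rfl
  have hK0dvd : Nat.card (K 0) ∣ f :=
    dvd_trans (Subgroup.card_dvd_of_le hK0le) hdvdf
  have hfle := omega_le_of_dvd hK0dvd hf.ne'
  omega

end Final


/-- for `G = PΓL₂(F_q)`, `q = p^f`, acting on the projective line, the
pointwise stabilizer of `⟨e₁⟩, ⟨e₂⟩, ⟨e₁+e₂⟩` is the group of field automorphisms, which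
is cyclic of order `f`; consequently `Irred(G,Ω) ≤ 3 + π(f)`. -/
theorem stmt_10 (p f : ℕ) [Fact p.Prime] (hf : 0 < f) :
    (∀ π : PGammaL2 (GaloisField p f),
      π ∈ listStab (PGammaL2 (GaloisField p f))
          [pt1 (GaloisField p f), pt2 (GaloisField p f), pt3 (GaloisField p f)] ↔
        ∃ τ : GaloisField p f ≃+* GaloisField p f,
          ∀ (v : Fin 2 → GaloisField p f) (hv : v ≠ 0),
            (π : Equiv.Perm (ProjLine (GaloisField p f))) (Projectivization.mk _ v hv) =
              Projectivization.mk _ (⇑τ ∘ v)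
                (fun h0 => hv (funext fun i =>
                  (map_eq_zero_iff τ τ.injective).mp (congrFun h0 i)))) ∧
    IsCyclic (listStab (PGammaL2 (GaloisField p f))
      [pt1 (GaloisField p f), pt2 (GaloisField p f), pt3 (GaloisField p f)]) ∧
    Nat.card (listStab (PGammaL2 (GaloisField p f))
      [pt1 (GaloisField p f), pt2 (GaloisField p f), pt3 (GaloisField p f)]) = f ∧
    irredStat (PGammaL2 (GaloisField p f)) (ProjLine (GaloisField p f)) ≤
      3 + (f.primeFactorsList.length : ℕ∞) := by
  refine ⟨fun π => stab123_iff π, ?_, ?_, ?_⟩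
  · haveI := isCyclic_ringAut p f hf
    exact isCyclic_of_surjective (stabMulEquiv (F := GaloisField p f))
      (stabMulEquiv (F := GaloisField p f)).surjective
  · rw [← Nat.card_congr (stabMulEquiv (F := GaloisField p f)).toEquiv]
    exact card_ringAut p f hf
  · apply sSup_le
    rintro n ⟨l, hirr, rfl⟩
    have h := irred_length_le p f hf l hirr
    calc (l.length : ℕ∞) ≤ ((3 + f.primeFactorsList.length : ℕ) : ℕ∞) := by
          exact_mod_cast h
      _ = 3 + (f.primeFactorsList.length : ℕ∞) := by push_cast; rfl
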